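/- Under Assumptions 1, 3 and 4, the moments of X_t satisfy: E|X_t|^ν = O(t^{max{0, ν−1}} exp(C₀ t)) for some 0 < C₀ < ∞ when E ln|φ + b₀| ≥ 0 with P(b₀ = 0) < 1, and also when E ln|φ + b₀| > 0 with P(b₀ = 0) = 1; and E|X_t|^ν = O(t^{1 + max{0, ν−1}}) when E ln|φ + b₀| = 0 with P(b₀ = 0) = 1. Here ν is the moment exponent of Assumption 1 and, when Assumption 4(ii) holds, ν is chosen so that ν < γ. -/

import Mathlib

open MeasureTheory ProbabilityTheory Filter
open scoped ENNReal NNReal Topology ProbabilityTheory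

namespace RCAR

variable {Ω : Type*} [MeasureSpace Ω]

/-- The RCAR(1) process `X_t = (φ + b_t) X_{t-1} + e_t` started from `X₀`. -/
noncomputable def Xproc (φ : ℝ) (b e : ℤ → Ω → ℝ) (X0 : Ω → ℝ) : ℕ → Ω → ℝ
  | 0 => X0
  | t + 1 => fun ω => (φ + b (t + 1) ω) * Xproc φ b e X0 t ω + e (t + 1) ω

/-- The strictly stationary solution `X̄_t = ∑_{s ≤ t} e_s ∏_{z=s+1}^t (φ + b_z)`. -/
noncomputable def Xbar (φ : ℝ) (b e : ℤ → Ω → ℝ) (t : ℤ) (ω : Ω) : ℝ :=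
  ∑' k : ℕ, e (t - k) ω * ∏ i ∈ Finset.range k, (φ + b (t - i) ω)

/-- `v_p = p⁻¹ ∑_{t=1}^p X_t²`. -/
noncomputable def vp (X : ℕ → Ω → ℝ) (p : ℕ) (ω : Ω) : ℝ :=
  (p : ℝ)⁻¹ * ∑ t ∈ Finset.Icc 1 p, (X t ω) ^ 2

/-- `D_T = (T-p)⁻¹ ∑_{t=p+1}^T v_p / (v_p + X_t²)`. -/
noncomputable def DT (X : ℕ → Ω → ℝ) (p T : ℕ) (ω : Ω) : ℝ :=
  ((T : ℝ) - (p : ℝ))⁻¹ * ∑ t ∈ Finset.Icc (p + 1) T, vp X p ω / (vp X p ω + (X t ω) ^ 2)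

/-- `E log |φ + b₀| < 0`, allowing the value `-∞`: the positive part of the integral is
(finite and) strictly smaller than the negative part. -/
def ElogNeg (φ : ℝ) (b0 : Ω → ℝ) : Prop :=
  ∫⁻ ω, ENNReal.ofReal (Real.log |φ + b0 ω|) ∂ℙ
    < ∫⁻ ω, ENNReal.ofReal (-Real.log |φ + b0 ω|) ∂ℙ

/-- `E log |φ + b₀| ≥ 0` (in particular the expectation is finite). -/
def ElogNonneg (φ : ℝ) (b0 : Ω → ℝ) : Prop :=
  Integrable (fun ω => Real.log |φ + b0 ω|) ℙ ∧ 0 ≤ ∫ ω, Real.log |φ + b0 ω| ∂ℙ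

/-- `E log |φ + b₀| = 0`. -/
def ElogZero (φ : ℝ) (b0 : Ω → ℝ) : Prop :=
  Integrable (fun ω => Real.log |φ + b0 ω|) ℙ ∧ ∫ ω, Real.log |φ + b0 ω| ∂ℙ = 0

/-- `E log |φ + b₀| > 0`. -/
def ElogPos (φ : ℝ) (b0 : Ω → ℝ) : Prop :=
  Integrable (fun ω => Real.log |φ + b0 ω|) ℙ ∧ 0 < ∫ ω, Real.log |φ + b0 ω| ∂ℙ

/-- Assumption 1: `{b_t}` and `{e_t}` are mutually independent sequences of i.i.d.
symmetric random variables with finite `ν`-th absolute moments (`ν > 0`), and `X₀` is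
independent of `{(b_t, e_t), t ≥ 1}` with `E|X₀|^ν < ∞`. -/
def Assumption1 (ν : ℝ) (b e : ℤ → Ω → ℝ) (X0 : Ω → ℝ) : Prop :=
  (∀ t, Measurable (b t)) ∧ (∀ t, Measurable (e t)) ∧ Measurable X0 ∧
  IndepFun (fun ω (t : ℤ) => b t ω) (fun ω (t : ℤ) => e t ω) ℙ ∧
  iIndepFun b ℙ ∧ (∀ t, IdentDistrib (b t) (b 0) ℙ ℙ) ∧
  iIndepFun e ℙ ∧ (∀ t, IdentDistrib (e t) (e 0) ℙ ℙ) ∧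
  IdentDistrib (b 0) (fun ω => -b 0 ω) ℙ ℙ ∧
  IdentDistrib (e 0) (fun ω => -e 0 ω) ℙ ℙ ∧
  0 < ν ∧ Integrable (fun ω => |b 0 ω| ^ ν) ℙ ∧ Integrable (fun ω => |e 0 ω| ^ ν) ℙ ∧
  Integrable (fun ω => |X0 ω| ^ ν) ℙ ∧
  IndepFun X0 (fun ω (t : ℕ) => (b (t + 1 : ℤ) ω, e (t + 1 : ℤ) ω)) ℙ

/-- Assumption 2: under stationarity, non-degeneracy of `X̄₀` and of `e₀`. -/
def Assumption2 (φ : ℝ) (b e : ℤ → Ω → ℝ) : Prop :=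
  ElogNeg φ (b 0) → (ℙ {ω | Xbar φ b e 0 ω = 0} < 1 ∧ ℙ {ω | e 0 ω = 0} < 1)

/-- `Y` has a (Lebesgue) density which is bounded. -/
def HasBoundedDensity (Y : Ω → ℝ) : Prop :=
  ∃ (f : ℝ → ℝ≥0∞) (M : ℝ≥0), (∀ x, f x ≤ M) ∧ Measure.map Y ℙ = volume.withDensity f

/-- Assumption 3: in the nonstationary regime, `e₀` has a bounded density; if the
autoregressive coefficient is genuinely random then `ln|φ + b₀|` has a finite `k`-th
moment for some `k > 2`; and `E X₀² < ∞`. -/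
def Assumption3 (φ : ℝ) (b e : ℤ → Ω → ℝ) (X0 : Ω → ℝ) : Prop :=
  ElogNonneg φ (b 0) →
    (HasBoundedDensity (e 0) ∧
     (ℙ {ω | b 0 ω = 0} < 1 →
        ∃ k : ℝ, 2 < k ∧ Integrable (fun ω => (abs (Real.log |φ + b 0 ω|)) ^ k) ℙ) ∧
     Integrable (fun ω => (X0 ω) ^ 2) ℙ)

/-- Assumption 4(i): `E X₀² < ∞` and `E|e₀|^{ν'} < ∞` for some `ν' > 2`. -/
def Assumption4i (e : ℤ → Ω → ℝ) (X0 : Ω → ℝ) : Prop :=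
  Integrable (fun ω => (X0 ω) ^ 2) ℙ ∧ ∃ ν' : ℝ, 2 < ν' ∧ Integrable (fun ω => |e 0 ω| ^ ν') ℙ

/-- Assumption 4(ii): regularly varying tails of index `γ ∈ (0,2]` for `e₀`, i.e.
`1 - F(x) = C₀ x^{-γ} + ς(x) x^{-γ}` for `x ≥ x₀`, and `E|X₀|^γ < ∞`. -/
def Assumption4ii (γ : ℝ) (e : ℤ → Ω → ℝ) (X0 : Ω → ℝ) : Prop :=
  0 < γ ∧ γ ≤ 2 ∧
  (∃ (C0 x0 : ℝ) (ς : ℝ → ℝ), 0 < C0 ∧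
    (∀ x : ℝ, x0 ≤ x → (ℙ {ω | x < e 0 ω}).toReal = C0 * x ^ (-γ) + ς x * x ^ (-γ)) ∧
    Tendsto ς atTop (𝓝 0) ∧
    AntitoneOn (fun x => ς x * x ^ (-γ)) (Set.Ici x0)) ∧
  Integrable (fun ω => |X0 ω| ^ γ) ℙ

/-- Assumption 4: in the unit-root case (`E ln|φ + b₀| = 0` with `b₀ = 0` a.s.),
either (i) or (ii) holds. -/
def Assumption4 (φ : ℝ) (b e : ℤ → Ω → ℝ) (X0 : Ω → ℝ) : Prop :=
  (ElogZero φ (b 0) ∧ (∀ᵐ ω ∂(ℙ : Measure Ω), b 0 ω = 0)) →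
    (Assumption4i e X0 ∨ ∃ γ : ℝ, Assumption4ii γ e X0)

end RCAR

namespace RCAR

/-- Assumption 5: `p = p(T) → ∞` with `lim sup_T p(T)/ln ln T < ∞`. -/
def Assumption5 (p : ℕ → ℕ) : Prop :=
  Tendsto p atTop atTop ∧
  ∃ C : ℝ, ∀ᶠ T in atTop, (p T : ℝ) ≤ C * Real.log (Real.log T)

end RCAR

namespace RCAR


section AuxLemmas

lemma aux_ofReal_prod {ι : Type*} (s : Finset ι) (f : ι → ℝ) (hf : ∀ i ∈ s, 0 ≤ f i) :
    ENNReal.ofReal (∏ i ∈ s, f i) = ∏ i ∈ s, ENNReal.ofReal (f i) := by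
  induction s using Finset.cons_induction with
  | empty => simp
  | cons a s ha ih =>
    rw [Finset.prod_cons, Finset.prod_cons,
      ENNReal.ofReal_mul (hf a (Finset.mem_cons_self a s)),
      ih (fun i hi => hf i (Finset.mem_cons_of_mem hi))]

lemma aux_sum_rpow_le {ι : Type*} (s : Finset ι) (g : ι → ℝ≥0∞) {p : ℝ} (hp : 0 < p) :
    (∑ i ∈ s, g i) ^ p ≤ (s.card : ℝ≥0∞) ^ (max 0 (p - 1)) * ∑ i ∈ s, g i ^ p := by
  rcases le_or_gt p 1 with h1 | h1
  · have hm : max 0 (p - 1) = 0 := max_eq_left (by linarith)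
    rw [hm, ENNReal.rpow_zero, one_mul]
    induction s using Finset.cons_induction with
    | empty => simp [ENNReal.zero_rpow_of_pos hp]
    | cons a s ha ih =>
      rw [Finset.sum_cons, Finset.sum_cons]
      exact le_trans (ENNReal.rpow_add_le_add_rpow _ _ hp.le h1) (by gcongr)
  · rcases s.eq_empty_or_nonempty with rfl | hs
    · simp [ENNReal.zero_rpow_of_pos hp]
    have hn0 : (s.card : ℝ≥0∞) ≠ 0 := by simpa using hs.card_pos.ne'
    have hnt : (s.card : ℝ≥0∞) ≠ ⊤ := ENNReal.natCast_ne_top _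
    have hcard : (1 : ℝ≥0∞) ≤ (s.card : ℝ≥0∞) := by exact_mod_cast hs.card_pos
    have h := ENNReal.rpow_arith_mean_le_arith_mean_rpow s (fun _ => (s.card : ℝ≥0∞)⁻¹)
      (fun i => (s.card : ℝ≥0∞) * g i)
      (by rw [Finset.sum_const, nsmul_eq_mul]; exact ENNReal.mul_inv_cancel hn0 hnt) h1.le
    have hL : ∀ i, (s.card : ℝ≥0∞)⁻¹ * ((s.card : ℝ≥0∞) * g i) = g i := fun i => by
      rw [← mul_assoc, ENNReal.inv_mul_cancel hn0 hnt, one_mul]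
    simp only [hL] at h
    calc (∑ i ∈ s, g i) ^ p ≤ ∑ i ∈ s, (s.card:ℝ≥0∞)⁻¹ * ((s.card:ℝ≥0∞) * g i) ^ p := h
    _ = ∑ i ∈ s, (s.card:ℝ≥0∞)^(p-1) * g i ^ p := by
        refine Finset.sum_congr rfl fun i _ => ?_
        rw [ENNReal.mul_rpow_of_nonneg _ _ (by linarith : (0:ℝ) ≤ p), ← mul_assoc]
        congr 1
        rw [← ENNReal.rpow_neg_one, ← ENNReal.rpow_add _ _ hn0 hnt]
        ring_nf
    _ = (s.card:ℝ≥0∞)^(p-1) * ∑ i ∈ s, g i ^ p := by rw [Finset.mul_sum]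
    _ ≤ _ :=
        mul_le_mul_left (ENNReal.rpow_le_rpow_of_exponent_le hcard (le_max_right _ _)) _

lemma aux_lintegral_prod {Ω ι : Type*} [MeasurableSpace Ω] {μ : Measure Ω}
    [IsProbabilityMeasure μ] {f : ι → Ω → ℝ≥0∞}
    (hind : iIndepFun f μ) (hm : ∀ i, Measurable (f i))
    (s : Finset ι) :
    ∫⁻ ω, ∏ i ∈ s, f i ω ∂μ = ∏ i ∈ s, ∫⁻ ω, f i ω ∂μ := by
  induction s using Finset.cons_induction with
  | empty => simp
  | cons a s ha ih =>
    have hindep : IndepFun (f a) (∏ j ∈ s, f j) μ :=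
      (hind.indepFun_finset_prod_of_notMem hm ha).symm
    have hindep' : IndepFun (f a) (fun ω => ∏ j ∈ s, f j ω) μ := by
      have : (∏ j ∈ s, f j) = fun ω => ∏ j ∈ s, f j ω := by
        funext ω; simp [Finset.prod_apply]
      rwa [this] at hindep
    have hmul := lintegral_mul_eq_lintegral_mul_lintegral_of_indepFun (hm a)
      (s.measurable_prod (fun i _ => hm i)) hindep'
    simp only [Finset.prod_cons]
    rw [← ih]
    exact hmul

lemma aux_abs_Xproc_le {Ω : Type*} [MeasureSpace Ω]
    (φ : ℝ) (b e : ℤ → Ω → ℝ) (X0 : Ω → ℝ) (t : ℕ) (ω : Ω) :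
    |Xproc φ b e X0 t ω| ≤
      |X0 ω| * ∏ z ∈ Finset.Icc (1:ℤ) (t:ℤ), |φ + b z ω| +
      ∑ s ∈ Finset.Icc (1:ℤ) (t:ℤ), |e s ω| * ∏ z ∈ Finset.Icc (s+1) (t:ℤ), |φ + b z ω| := by
  induction t with
  | zero => simp [Xproc]
  | succ t ih =>
    have hins : ∀ a : ℤ, a ≤ (t:ℤ) + 1 →
        Finset.Icc a ((t:ℤ)+1) = insert ((t:ℤ)+1) (Finset.Icc a (t:ℤ)) := by
      intro a ha; ext x; simp only [Finset.mem_Icc, Finset.mem_insert]; omega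
    have hnm : ∀ a : ℤ, ((t:ℤ)+1) ∉ Finset.Icc a (t:ℤ) := by
      intro a; simp only [Finset.mem_Icc]; omega
    have hstep : |Xproc φ b e X0 (t+1) ω| ≤
        |φ + b ((t:ℤ)+1) ω| * |Xproc φ b e X0 t ω| + |e ((t:ℤ)+1) ω| := by
      simp only [Xproc]
      exact (abs_add_le _ _).trans (by rw [abs_mul])
    set c : ℝ := |φ + b ((t:ℤ)+1) ω| with hc
    have hc0 : 0 ≤ c := abs_nonneg _
    calc |Xproc φ b e X0 (t+1) ω|
        ≤ c * |Xproc φ b e X0 t ω| + |e ((t:ℤ)+1) ω| := hstep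
      _ ≤ c * (|X0 ω| * ∏ z ∈ Finset.Icc (1:ℤ) (t:ℤ), |φ + b z ω| +
            ∑ s ∈ Finset.Icc (1:ℤ) (t:ℤ), |e s ω| * ∏ z ∈ Finset.Icc (s+1) (t:ℤ), |φ + b z ω|)
            + |e ((t:ℤ)+1) ω| := by
          gcongr
      _ = _ := by
          push_cast
          rw [hins 1 (by omega), Finset.prod_insert (hnm 1), Finset.sum_insert (hnm 1)]
          rw [Finset.Icc_eq_empty (by omega : ¬ ((t:ℤ)+1+1) ≤ (t:ℤ)+1), Finset.prod_empty]
          have hsum : ∑ x ∈ Finset.Icc (1:ℤ) (t:ℤ), |e x ω| *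
                ∏ z ∈ Finset.Icc (x+1) ((t:ℤ)+1), |φ + b z ω|
              = ∑ x ∈ Finset.Icc (1:ℤ) (t:ℤ),
                c * (|e x ω| * ∏ z ∈ Finset.Icc (x+1) (t:ℤ), |φ + b z ω|) := by
            refine Finset.sum_congr rfl fun s hs => ?_
            rw [hins (s+1) (by have := (Finset.mem_Icc.mp hs).2; omega),
              Finset.prod_insert (hnm (s+1))]
            ring
          rw [hsum, ← Finset.mul_sum, hc]
          ring

end AuxLemmas

/-- Lemma `expect-vp-ha`: moment bounds for `X_t` in the nonstationary
regimes: `E|X_t|^ν = O(t^{max{0,ν-1}} e^{C₀ t})` when `E ln|φ+b₀| ≥ 0` with `P(b₀=0) < 1`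
and when `E ln|φ+b₀| > 0` with `P(b₀=0) = 1`; and `E|X_t|^ν = O(t^{1+max{0,ν-1}})` when
`E ln|φ+b₀| = 0` with `P(b₀=0) = 1`.  Here `ν` is the exponent of Assumption 1, chosen with
`ν < γ` when Assumption 4(ii) holds. -/
theorem moment_bounds_nonstationary
    {Ω : Type*} [MeasureSpace Ω] [IsProbabilityMeasure (ℙ : Measure Ω)]
    (φ ν : ℝ) (b e : ℤ → Ω → ℝ) (X0 : Ω → ℝ)
    (h1 : Assumption1 ν b e X0)
    (h3 : Assumption3 φ b e X0)
    (h4 : (ElogZero φ (b 0) ∧ (∀ᵐ ω ∂(ℙ : Measure Ω), b 0 ω = 0)) →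
      (Assumption4i e X0 ∨ ∃ γ : ℝ, Assumption4ii γ e X0 ∧ ν < γ)) :
    ∃ C0 C1 : ℝ, 0 < C0 ∧
      ((ElogNonneg φ (b 0) ∧ ℙ {ω | b 0 ω = 0} < 1) →
        ∀ t : ℕ, 1 ≤ t →
          ∫⁻ ω, ENNReal.ofReal (|Xproc φ b e X0 t ω| ^ ν) ∂ℙ
            ≤ ENNReal.ofReal (C1 * (t : ℝ) ^ max 0 (ν - 1) * Real.exp (C0 * t))) ∧
      ((ElogPos φ (b 0) ∧ (∀ᵐ ω ∂(ℙ : Measure Ω), b 0 ω = 0)) →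
        ∀ t : ℕ, 1 ≤ t →
          ∫⁻ ω, ENNReal.ofReal (|Xproc φ b e X0 t ω| ^ ν) ∂ℙ
            ≤ ENNReal.ofReal (C1 * (t : ℝ) ^ max 0 (ν - 1) * Real.exp (C0 * t))) ∧
      ((ElogZero φ (b 0) ∧ (∀ᵐ ω ∂(ℙ : Measure Ω), b 0 ω = 0)) →
        ∀ t : ℕ, 1 ≤ t →
          ∫⁻ ω, ENNReal.ofReal (|Xproc φ b e X0 t ω| ^ ν) ∂ℙ
            ≤ ENNReal.ofReal (C1 * (t : ℝ) ^ (1 + max 0 (ν - 1)))) := by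
  obtain ⟨hbm, hem, hX0m, hbe, hbind, hbid, heind, heid, -, -, hν, hbint, heint, hX0int,
    hX0ind⟩ := h1
  clear h3 h4
  set q := max 0 (ν - 1) with hqdef
  have hq0 : 0 ≤ q := le_max_left _ _
  set gB : ℝ → ℝ≥0∞ := fun x => ENNReal.ofReal (|φ + x| ^ ν) with hgBdef
  set gA : ℝ → ℝ≥0∞ := fun x => ENNReal.ofReal (|x| ^ ν) with hgAdef
  have hgB : Measurable gB :=
    (((measurable_const.add measurable_id).abs).pow measurable_const).ennreal_ofReal
  have hgA : Measurable gA := ((measurable_id.abs).pow measurable_const).ennreal_ofReal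
  set m := ∫⁻ ω, gB (b 0 ω) ∂ℙ with hmdef
  set K0 := ∫⁻ ω, gA (X0 ω) ∂ℙ with hK0def
  set Ke := ∫⁻ ω, gA (e 0 ω) ∂ℙ with hKedef
  have hmB : ∀ z : ℤ, ∫⁻ ω, gB (b z ω) ∂ℙ = m := fun z => ((hbid z).comp hgB).lintegral_eq
  have hmE : ∀ z : ℤ, ∫⁻ ω, gA (e z ω) ∂ℙ = Ke := fun z => ((heid z).comp hgA).lintegral_eq
  have hBf : ∀ z : ℤ, Measurable (fun ω => gB (b z ω)) := fun z => hgB.comp (hbm z)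
  have hBiind : iIndepFun (fun (z : ℤ) ω => gB (b z ω)) ℙ :=
    hbind.comp (fun _ => gB) (fun _ => hgB)
  have hProd : ∀ I : Finset ℤ, ∫⁻ ω, ∏ z ∈ I, gB (b z ω) ∂ℙ = m ^ I.card := by
    intro I
    rw [aux_lintegral_prod hBiind hBf I, Finset.prod_congr rfl (fun z _ => hmB z),
      Finset.prod_const]
  have hKetop : Ke ≠ ⊤ := heint.lintegral_lt_top.ne
  have hK0top : K0 ≠ ⊤ := hX0int.lintegral_lt_top.ne
  have hmtop : m ≠ ⊤ := by
    have hpt : ∀ ω, gB (b 0 ω)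
        ≤ ENNReal.ofReal (2^ν * |φ|^ν) + ENNReal.ofReal (2^ν) * gA (b 0 ω) := by
      intro ω
      have hmax : (max |φ| |b 0 ω|) ^ ν ≤ |φ| ^ ν + |b 0 ω| ^ ν := by
        rcases max_choice |φ| (|b 0 ω|) with h | h <;> rw [h]
        · exact le_add_of_nonneg_right (Real.rpow_nonneg (abs_nonneg _) _)
        · exact le_add_of_nonneg_left (Real.rpow_nonneg (abs_nonneg _) _)
      have h1 : |φ + b 0 ω| ^ ν ≤ 2^ν * |φ|^ν + 2^ν * |b 0 ω|^ν := by
        have habs : |φ + b 0 ω| ≤ 2 * max |φ| |b 0 ω| := by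
          refine (abs_add_le _ _).trans ?_
          have := le_max_left |φ| (|b 0 ω|); have := le_max_right |φ| (|b 0 ω|)
          linarith
        calc |φ + b 0 ω| ^ ν ≤ (2 * max |φ| |b 0 ω|) ^ ν :=
              Real.rpow_le_rpow (abs_nonneg _) habs hν.le
          _ = 2 ^ ν * (max |φ| |b 0 ω|) ^ ν :=
              Real.mul_rpow (by norm_num) (le_max_of_le_left (abs_nonneg _))
          _ ≤ 2 ^ ν * (|φ|^ν + |b 0 ω|^ν) :=
              mul_le_mul_of_nonneg_left hmax (Real.rpow_nonneg (by norm_num) _)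
          _ = 2^ν * |φ|^ν + 2^ν * |b 0 ω|^ν := by ring
      calc gB (b 0 ω) ≤ ENNReal.ofReal (2^ν * |φ|^ν + 2^ν * |b 0 ω|^ν) := by
            simp only [hgBdef]; exact ENNReal.ofReal_le_ofReal h1
        _ = ENNReal.ofReal (2^ν * |φ|^ν) + ENNReal.ofReal (2^ν) * gA (b 0 ω) := by
            simp only [hgAdef]
            rw [ENNReal.ofReal_add (by positivity) (by positivity),
              ENNReal.ofReal_mul (show (0:ℝ) ≤ 2^ν by positivity),
              ENNReal.ofReal_mul (show (0:ℝ) ≤ 2^ν by positivity)]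
    have hfin : m < ⊤ := by
      calc m ≤ ∫⁻ ω, (ENNReal.ofReal (2^ν * |φ|^ν) + ENNReal.ofReal (2^ν) * gA (b 0 ω)) ∂ℙ :=
            lintegral_mono hpt
        _ = ENNReal.ofReal (2^ν * |φ|^ν) * 1 + ENNReal.ofReal (2^ν) * ∫⁻ ω, gA (b 0 ω) ∂ℙ := by
            rw [lintegral_add_left measurable_const, lintegral_const,
              lintegral_const_mul' _ _ ENNReal.ofReal_ne_top, measure_univ]
        _ < ⊤ := by
            rw [mul_one]
            refine ENNReal.add_lt_top.mpr ⟨ENNReal.ofReal_lt_top, ?_⟩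
            exact ENNReal.mul_lt_top ENNReal.ofReal_lt_top
              (show (∫⁻ ω, gA (b 0 ω) ∂ℙ) < ⊤ from hbint.lintegral_lt_top)
    exact hfin.ne
  set Mb := max m 1 with hMbdef
  have hmMb : m ≤ Mb := le_max_left _ _
  have hMb1 : (1:ℝ≥0∞) ≤ Mb := le_max_right _ _
  have hMbt : Mb ≠ ⊤ := by
    rw [hMbdef]
    exact (max_lt hmtop.lt_top ENNReal.one_lt_top).ne
  set BR := Mb.toReal with hBRdef
  have hBR1 : (1:ℝ) ≤ BR := by
    rw [hBRdef, ← ENNReal.toReal_one]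
    exact ENNReal.toReal_mono hMbt hMb1
  have hBR0 : (0:ℝ) < BR := lt_of_lt_of_le one_pos hBR1
  have hMbeq : Mb = ENNReal.ofReal BR := (ENNReal.ofReal_toReal hMbt).symm
  have hKKtop : K0 + Ke ≠ ⊤ := ENNReal.add_ne_top.mpr ⟨hK0top, hKetop⟩
  set KR := (K0 + Ke).toReal + 1 with hKRdef
  have hKR1 : (1:ℝ) ≤ KR := by
    rw [hKRdef]
    exact le_add_of_nonneg_left ENNReal.toReal_nonneg
  have hKRle : K0 + Ke ≤ ENNReal.ofReal KR := by
    rw [← ENNReal.ofReal_toReal hKKtop]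
    refine ENNReal.ofReal_le_ofReal ?_
    rw [hKRdef]; linarith
  -- the master bound
  have master : ∀ t : ℕ,
      ∫⁻ ω, ENNReal.ofReal (|Xproc φ b e X0 t ω| ^ ν) ∂ℙ
        ≤ ENNReal.ofReal (((t:ℝ)+1) ^ q * (((t:ℝ)+1) * (KR * BR ^ t))) := by
    intro t
    set I : Finset ℤ := Finset.Icc 0 (t:ℤ) with hIdef
    have hIcard : I.card = t + 1 := by rw [hIdef, Int.card_Icc]; omega
    set a : ℤ → Ω → ℝ := fun s ω =>
      (if s = 0 then |X0 ω| else |e s ω|) * ∏ z ∈ Finset.Icc (s+1) (t:ℤ), |φ + b z ω| with hadef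
    have ha0 : ∀ s ω, 0 ≤ a s ω := by
      intro s ω
      refine mul_nonneg ?_ (Finset.prod_nonneg fun _ _ => abs_nonneg _)
      split <;> exact abs_nonneg _
    have hXS : ∀ ω, |Xproc φ b e X0 t ω| ≤ ∑ s ∈ I, a s ω := by
      intro ω
      have h0 : I = insert 0 (Finset.Icc 1 (t:ℤ)) := by
        ext x; simp only [hIdef, Finset.mem_Icc, Finset.mem_insert]; omega
      rw [h0, Finset.sum_insert (by simp)]
      refine (aux_abs_Xproc_le φ b e X0 t ω).trans (le_of_eq ?_)
      have h1 : a 0 ω = |X0 ω| * ∏ z ∈ Finset.Icc (1:ℤ) (t:ℤ), |φ + b z ω| := by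
        simp only [hadef]; norm_num
      have h2 : ∑ s ∈ Finset.Icc (1:ℤ) (t:ℤ), a s ω
          = ∑ s ∈ Finset.Icc (1:ℤ) (t:ℤ), |e s ω| * ∏ z ∈ Finset.Icc (s+1) (t:ℤ), |φ + b z ω| := by
        refine Finset.sum_congr rfl fun s hs => ?_
        simp only [hadef]
        rw [if_neg (by have := (Finset.mem_Icc.mp hs).1; omega)]
      rw [h1, h2]
    have hptw : ∀ ω, ENNReal.ofReal (|Xproc φ b e X0 t ω| ^ ν)
        ≤ (I.card : ℝ≥0∞) ^ q * ∑ s ∈ I, (ENNReal.ofReal (a s ω)) ^ ν := by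
      intro ω
      calc ENNReal.ofReal (|Xproc φ b e X0 t ω| ^ ν)
          ≤ ENNReal.ofReal ((∑ s ∈ I, a s ω) ^ ν) :=
            ENNReal.ofReal_le_ofReal (Real.rpow_le_rpow (abs_nonneg _) (hXS ω) hν.le)
        _ = (ENNReal.ofReal (∑ s ∈ I, a s ω)) ^ ν :=
            (ENNReal.ofReal_rpow_of_nonneg (Finset.sum_nonneg fun s _ => ha0 s ω) hν.le).symm
        _ = (∑ s ∈ I, ENNReal.ofReal (a s ω)) ^ ν := by
            rw [ENNReal.ofReal_sum_of_nonneg (fun s _ => ha0 s ω)]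
        _ ≤ _ := by rw [hqdef]; exact aux_sum_rpow_le I _ hν
    have haP : ∀ s, ∀ ω, (ENNReal.ofReal (a s ω)) ^ ν
        = (if s = 0 then gA (X0 ω) else gA (e s ω)) *
          ∏ z ∈ Finset.Icc (s+1) (t:ℤ), gB (b z ω) := by
      intro s ω
      rw [ENNReal.ofReal_rpow_of_nonneg (ha0 s ω) hν.le]
      simp only [hadef, hgAdef, hgBdef]
      rw [Real.mul_rpow (by split <;> exact abs_nonneg _)
          (Finset.prod_nonneg fun _ _ => abs_nonneg _),
        ← Real.finset_prod_rpow _ _ (fun z _ => abs_nonneg _) ν,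
        ENNReal.ofReal_mul (by split <;> positivity),
        aux_ofReal_prod _ _ (fun z _ => Real.rpow_nonneg (abs_nonneg _) ν)]
      congr 1
      split <;> rfl
    have hterm_meas : ∀ s ∈ I, Measurable (fun ω => (ENNReal.ofReal (a s ω)) ^ ν) := by
      intro s _
      refine Measurable.pow ?_ measurable_const
      refine Measurable.ennreal_ofReal ?_
      simp only [hadef]
      refine Measurable.mul ?_ (Finset.measurable_prod _ fun z _ =>
        (measurable_const.add (hbm z)).abs)
      by_cases hs : s = 0
      · simp only [hs, if_pos]; exact hX0m.abs
      · simp only [hs, if_neg, ite_false]; exact (hem s).abs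
    have hterm : ∀ s ∈ I, ∫⁻ ω, (ENNReal.ofReal (a s ω)) ^ ν ∂ℙ ≤ (K0 + Ke) * Mb ^ t := by
      intro s hsI
      have hs0t : 0 ≤ s ∧ s ≤ (t:ℤ) := Finset.mem_Icc.mp (by rwa [hIdef] at hsI)
      have hcard2 : (Finset.Icc (s+1) (t:ℤ)).card ≤ t := by
        rw [Int.card_Icc]; omega
      have heqint : ∫⁻ ω, (ENNReal.ofReal (a s ω)) ^ ν ∂ℙ
          = (if s = 0 then K0 else Ke) * m ^ (Finset.Icc (s+1) (t:ℤ)).card := by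
        rw [lintegral_congr (fun ω => haP s ω)]
        by_cases hs : s = 0
        · subst hs
          simp only [if_pos]
          have hψ : Measurable (fun w : ℕ → ℝ × ℝ =>
              ∏ z ∈ Finset.Icc ((0:ℤ)+1) (t:ℤ), gB ((w (z-1).toNat).1)) :=
            Finset.measurable_prod _ fun z _ => hgB.comp ((measurable_pi_apply _).fst)
          have hIc := hX0ind.comp hgA hψ
          have hEq : ((fun w : ℕ → ℝ × ℝ =>
                ∏ z ∈ Finset.Icc ((0:ℤ)+1) (t:ℤ), gB ((w (z-1).toNat).1)) ∘
                (fun ω (k : ℕ) => (b (k+1:ℤ) ω, e (k+1:ℤ) ω)))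
              = fun ω => ∏ z ∈ Finset.Icc ((0:ℤ)+1) (t:ℤ), gB (b z ω) := by
            funext ω
            simp only [Function.comp]
            refine Finset.prod_congr rfl fun z hz => ?_
            have h1z : (0:ℤ)+1 ≤ z := (Finset.mem_Icc.mp hz).1
            have hze : ((z-1).toNat : ℤ) + 1 = z := by omega
            rw [hze]
          rw [hEq] at hIc
          have hmul := lintegral_mul_eq_lintegral_mul_lintegral_of_indepFun''
            ((hgA.comp hX0m).aemeasurable)
            ((Finset.measurable_prod _ fun z _ => hBf z).aemeasurable) hIc
          calc ∫⁻ (ω : Ω), gA (X0 ω) * ∏ z ∈ Finset.Icc ((0:ℤ)+1) (t:ℤ), gB (b z ω) ∂ℙ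
              = (∫⁻ ω, gA (X0 ω) ∂ℙ) *
                ∫⁻ ω, ∏ z ∈ Finset.Icc ((0:ℤ)+1) (t:ℤ), gB (b z ω) ∂ℙ := hmul
            _ = K0 * m ^ (Finset.Icc ((0:ℤ)+1) (t:ℤ)).card := by rw [hProd]
        · simp only [if_neg hs]
          have hIc := hbe.symm.comp
            (show Measurable fun w : ℤ → ℝ => gA (w s) from hgA.comp (measurable_pi_apply s))
            (show Measurable fun w : ℤ → ℝ => ∏ z ∈ Finset.Icc (s+1) (t:ℤ), gB (w z) from
              Finset.measurable_prod _ fun z _ => hgB.comp (measurable_pi_apply z))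
          have hmul := lintegral_mul_eq_lintegral_mul_lintegral_of_indepFun''
            ((hgA.comp (hem s)).aemeasurable)
            ((Finset.measurable_prod _ fun z _ => hBf z).aemeasurable) hIc
          calc ∫⁻ (ω : Ω), gA (e s ω) * ∏ z ∈ Finset.Icc (s+1) (t:ℤ), gB (b z ω) ∂ℙ
              = (∫⁻ ω, gA (e s ω) ∂ℙ) *
                ∫⁻ ω, ∏ z ∈ Finset.Icc (s+1) (t:ℤ), gB (b z ω) ∂ℙ := hmul
            _ = Ke * m ^ (Finset.Icc (s+1) (t:ℤ)).card := by rw [hProd, hmE s]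
      rw [heqint]
      refine mul_le_mul' ?_ ?_
      · split
        · exact le_self_add
        · exact le_add_self
      · calc m ^ (Finset.Icc (s+1) (t:ℤ)).card ≤ Mb ^ (Finset.Icc (s+1) (t:ℤ)).card := by
              gcongr
          _ ≤ Mb ^ t := by
              gcongr
    calc ∫⁻ ω, ENNReal.ofReal (|Xproc φ b e X0 t ω| ^ ν) ∂ℙ
        ≤ ∫⁻ ω, (I.card : ℝ≥0∞) ^ q * ∑ s ∈ I, (ENNReal.ofReal (a s ω)) ^ ν ∂ℙ :=
          lintegral_mono hptw
      _ = (I.card : ℝ≥0∞) ^ q * ∑ s ∈ I, ∫⁻ ω, (ENNReal.ofReal (a s ω)) ^ ν ∂ℙ := by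
          rw [lintegral_const_mul' _ _
            (ENNReal.rpow_ne_top_of_nonneg hq0 (ENNReal.natCast_ne_top _)),
            lintegral_finset_sum I hterm_meas]
      _ ≤ (I.card : ℝ≥0∞) ^ q * ∑ _s ∈ I, (K0 + Ke) * Mb ^ t :=
          mul_le_mul' le_rfl (Finset.sum_le_sum hterm)
      _ = (I.card : ℝ≥0∞) ^ q * (I.card * ((K0 + Ke) * Mb ^ t)) := by
          rw [Finset.sum_const, nsmul_eq_mul]
      _ ≤ ENNReal.ofReal (((t:ℝ)+1) ^ q * (((t:ℝ)+1) * (KR * BR ^ t))) := by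
          rw [hIcard]
          have hcast : ((t+1 : ℕ) : ℝ≥0∞) = ENNReal.ofReal ((t:ℝ)+1) := by
            rw [← ENNReal.ofReal_natCast (t+1)]
            norm_num
          rw [hcast]
          have h1 : (K0 + Ke) * Mb ^ t ≤ ENNReal.ofReal (KR * BR ^ t) := by
            rw [ENNReal.ofReal_mul (by linarith), ENNReal.ofReal_pow hBR0.le, ← hMbeq]
            exact mul_le_mul' hKRle le_rfl
          refine le_trans (mul_le_mul' le_rfl (mul_le_mul' le_rfl h1)) ?_
          rw [ENNReal.ofReal_rpow_of_nonneg (by positivity) hq0,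
            ← ENNReal.ofReal_mul (by positivity), ← ENNReal.ofReal_mul (by positivity)]
  -- final constants
  set C0 := 1 + Real.log BR with hC0def
  have hlogBR : 0 ≤ Real.log BR := Real.log_nonneg hBR1
  have hC0 : 0 < C0 := by rw [hC0def]; linarith
  set C1 := 2 ^ (q + 1) * KR with hC1def
  have h2q : (2:ℝ) ^ (q+1) = 2 ^ q * 2 := by
    rw [Real.rpow_add (by norm_num : (0:ℝ) < 2), Real.rpow_one]
  have hexp : ∀ t : ℕ, 1 ≤ t →
      ((t:ℝ)+1) ^ q * (((t:ℝ)+1) * (KR * BR ^ t)) ≤ C1 * (t:ℝ) ^ q * Real.exp (C0 * t) := by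
    intro t ht
    have ht1 : (1:ℝ) ≤ (t:ℝ) := by exact_mod_cast ht
    have ht0 : (0:ℝ) < t := by linarith
    have h2t : (t:ℝ) + 1 ≤ 2 * t := by linarith
    have hA : ((t:ℝ)+1) ^ q ≤ 2 ^ q * (t:ℝ) ^ q := by
      rw [← Real.mul_rpow (by norm_num) ht0.le]
      exact Real.rpow_le_rpow (by positivity) h2t hq0
    have htexp : (t:ℝ) ≤ Real.exp t := by
      have := Real.add_one_le_exp (t:ℝ); linarith
    have hBt : BR ^ t = Real.exp ((t:ℝ) * Real.log BR) := by
      rw [Real.exp_nat_mul, Real.exp_log hBR0]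
    have hKR0 : (0:ℝ) < KR := by linarith
    have hBt0 : (0:ℝ) ≤ BR ^ t := by positivity
    have h1 : ((t:ℝ)+1) ≤ 2 * Real.exp t := by nlinarith
    have harg : (t:ℝ) + (t:ℝ) * Real.log BR = (1 + Real.log BR) * t := by ring
    calc ((t:ℝ)+1) ^ q * (((t:ℝ)+1) * (KR * BR ^ t))
        ≤ (2 ^ q * (t:ℝ) ^ q) * ((2 * Real.exp t) * (KR * BR ^ t)) := by
          refine mul_le_mul hA (mul_le_mul h1 le_rfl (by positivity) (by positivity))
            (by positivity) (by positivity)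
      _ = (2 ^ q * 2 * KR) * (t:ℝ) ^ q * (Real.exp t * Real.exp ((t:ℝ) * Real.log BR)) := by
          rw [hBt]; ring
      _ = C1 * (t:ℝ) ^ q * Real.exp (C0 * t) := by
          rw [← Real.exp_add, harg, hC1def, h2q, hC0def]
  have hpoly : BR = 1 → ∀ t : ℕ, 1 ≤ t →
      ((t:ℝ)+1) ^ q * (((t:ℝ)+1) * (KR * BR ^ t)) ≤ C1 * (t:ℝ) ^ (1 + q) := by
    intro hBReq t ht
    have ht1 : (1:ℝ) ≤ (t:ℝ) := by exact_mod_cast ht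
    have ht0 : (0:ℝ) < t := by linarith
    have h2t : (t:ℝ) + 1 ≤ 2 * t := by linarith
    have hA : ((t:ℝ)+1) ^ q ≤ 2 ^ q * (t:ℝ) ^ q := by
      rw [← Real.mul_rpow (by norm_num) ht0.le]
      exact Real.rpow_le_rpow (by positivity) h2t hq0
    have hKR0 : (0:ℝ) < KR := by linarith
    have htq : (t:ℝ) ^ (1+q) = (t:ℝ) * (t:ℝ) ^ q := by
      rw [Real.rpow_add ht0, Real.rpow_one]
    rw [hBReq, one_pow]
    calc ((t:ℝ)+1) ^ q * (((t:ℝ)+1) * (KR * 1))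
        ≤ (2 ^ q * (t:ℝ) ^ q) * ((2 * t) * (KR * 1)) := by
          refine mul_le_mul hA (mul_le_mul h2t le_rfl (by positivity) (by positivity))
            (by positivity) (by positivity)
      _ = C1 * ((t:ℝ) * (t:ℝ) ^ q) := by rw [hC1def, h2q]; ring
      _ = C1 * (t:ℝ) ^ (1+q) := by rw [htq]
  refine ⟨C0, C1, hC0, ?_, ?_, ?_⟩
  · rintro - t ht
    exact (master t).trans (ENNReal.ofReal_le_ofReal (hexp t ht))
  · rintro - t ht
    exact (master t).trans (ENNReal.ofReal_le_ofReal (hexp t ht))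
  · rintro ⟨hz, hb0⟩ t ht
    have hphi : Real.log |φ| = 0 := by
      have hae : (fun ω => Real.log |φ + b 0 ω|) =ᵐ[ℙ] (fun _ => Real.log |φ|) :=
        hb0.mono fun ω h => by dsimp only; rw [h, add_zero]
      have hint := hz.2
      rw [integral_congr_ae hae, integral_const, probReal_univ,
        one_smul] at hint
      exact hint
    have habs : |φ| ≤ 1 := by
      have h0 := abs_nonneg φ
      rcases Real.log_eq_zero.mp hphi with h | h | h <;> linarith
    have hmle : m ≤ 1 := by
      have hae2 : (fun ω => gB (b 0 ω)) =ᵐ[ℙ] (fun _ => ENNReal.ofReal (|φ| ^ ν)) :=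
        hb0.mono fun ω h => by simp only [hgBdef]; rw [h, add_zero]
      rw [hmdef, lintegral_congr_ae hae2, lintegral_const, measure_univ, mul_one]
      exact ENNReal.ofReal_le_one.mpr (Real.rpow_le_one (abs_nonneg _) habs hν.le)
    have hBReq : BR = 1 := by
      rw [hBRdef, hMbdef, max_eq_right hmle, ENNReal.toReal_one]
    exact (master t).trans (ENNReal.ofReal_le_ofReal (hpoly hBReq t ht))

end RCAR
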